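/- Under the far-field model with M = √N antennas per row and fixed element size √A, the normalized interference gain I(M) = (A cos θ₂/(4πd₂²))·|sin(πM√AΩ/λ)/sin(π√AΩ/λ)|² is bounded by C = (A cos θ₂/(4πd₂²))/sin²(π√AΩ/λ) uniformly in M (assuming √AΩ/λ ∉ ℤ), while the signal gain ‖h₁‖² = M²A cos θ₁/(4πd₁²) grows like M². Consequently, the MR SINR loss α^MR = x/(1+x) with x = SNR₂·I(M)/1 satisfies limsup_{M→∞} α^MR ≤ SNR₂C/(1+SNR₂C) < 1, so γ^MR/ (SNR₁‖h₁‖²) stays bounded below by a positive constant. -/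

import Mathlib

open Real Filter

theorem farfield_mr_loss_bounded
    (A lam d₂ θ₁ θ₂ SNR₂ : ℝ) (hA : 0 < A) (hlam : 0 < lam) (hd₂ : 0 < d₂)
    (hc₂ : 0 ≤ Real.cos θ₂) (hS₂ : 0 < SNR₂)
    (hnotint : ¬∃ k : ℤ, Real.sqrt A * (Real.sin θ₂ - Real.sin θ₁) / lam = (k : ℝ)) :
    let Ω : ℝ := Real.sin θ₂ - Real.sin θ₁
    let I : ℕ → ℝ := fun M => (A * Real.cos θ₂ / (4 * π * d₂ ^ 2)) *
      (Real.sin (π * (M : ℝ) * Real.sqrt A * Ω / lam) /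
        Real.sin (π * Real.sqrt A * Ω / lam)) ^ 2
    let C : ℝ := (A * Real.cos θ₂ / (4 * π * d₂ ^ 2)) /
      Real.sin (π * Real.sqrt A * Ω / lam) ^ 2
    let α : ℕ → ℝ := fun M => (SNR₂ * I M) / (1 + SNR₂ * I M)
    (∀ M : ℕ, I M ≤ C) ∧
    Filter.limsup α Filter.atTop ≤ SNR₂ * C / (1 + SNR₂ * C) ∧
    SNR₂ * C / (1 + SNR₂ * C) < 1 ∧
    ∃ c : ℝ, 0 < c ∧ ∀ M : ℕ, c ≤ 1 - α M := by
  intro Ω I C α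
  have hπ : (0:ℝ) < π := Real.pi_pos
  have hsne : Real.sin (π * Real.sqrt A * Ω / lam) ≠ 0 := by
    intro h
    rw [Real.sin_eq_zero_iff] at h
    obtain ⟨n, hn⟩ := h
    apply hnotint
    refine ⟨n, ?_⟩
    have h2 : π * (Real.sqrt A * Ω / lam) = π * (n : ℝ) := by linear_combination -hn
    have := mul_left_cancel₀ (ne_of_gt hπ) h2
    simpa [Ω] using this
  have hs2 : 0 < Real.sin (π * Real.sqrt A * Ω / lam) ^ 2 :=
    pow_two_pos_of_ne_zero hsne
  have hK : 0 ≤ A * Real.cos θ₂ / (4 * π * d₂ ^ 2) := by positivity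
  have hIC : ∀ M : ℕ, I M ≤ C := by
    intro M
    have h1 : Real.sin (π * (M : ℝ) * Real.sqrt A * Ω / lam) ^ 2 ≤ 1 :=
      Real.sin_sq_le_one _
    have h0 : 0 ≤ Real.sin (π * (M : ℝ) * Real.sqrt A * Ω / lam) ^ 2 := sq_nonneg _
    calc I M = (A * Real.cos θ₂ / (4 * π * d₂ ^ 2) *
          Real.sin (π * (M : ℝ) * Real.sqrt A * Ω / lam) ^ 2) /
          Real.sin (π * Real.sqrt A * Ω / lam) ^ 2 := by
            simp only [I]; rw [div_pow]; ring
      _ ≤ C := by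
            simp only [C]
            gcongr
            nlinarith
  -- nonnegativity of I
  have hI0 : ∀ M : ℕ, 0 ≤ I M := by
    intro M
    simp only [I]
    positivity
  have hC0 : 0 ≤ C := le_trans (hI0 0) (hIC 0)
  have hden : ∀ M : ℕ, 0 < 1 + SNR₂ * I M := fun M => by nlinarith [hI0 M]
  have hdenC : 0 < 1 + SNR₂ * C := by nlinarith
  have hαle : ∀ M : ℕ, α M ≤ SNR₂ * C / (1 + SNR₂ * C) := by
    intro M
    simp only [α]
    rw [div_le_div_iff₀ (hden M) hdenC]
    have hIM := hIC M
    nlinarith [hI0 M]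
  have hα0 : ∀ M : ℕ, 0 ≤ α M := fun M => by
    have := hI0 M
    have := hden M
    positivity
  refine ⟨hIC, ?_, ?_, ?_⟩
  · exact Filter.limsup_le_of_le
      (Filter.isCoboundedUnder_le_of_le atTop hα0)
      (Filter.Eventually.of_forall hαle)
  · rw [div_lt_one hdenC]; linarith
  · refine ⟨1 / (1 + SNR₂ * C), by positivity, fun M => ?_⟩
    have h1 : α M ≤ SNR₂ * C / (1 + SNR₂ * C) := hαle M
    have h2 : SNR₂ * C / (1 + SNR₂ * C) = 1 - 1 / (1 + SNR₂ * C) := by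
      field_simp
      ring
    linarith
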